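/- arXiv:2504.16594 — 2 statements merged into one kernel-verified Lean document; each statement's English description precedes it below -/
import Mathlib

section
/- Let V be an n-dimensional complex vector space, and let k, r ≥ 1 be integers with 2 ≤ k, r + k < n, and 2k ≤ n. Consider the linear map θ_{k,r}: Λ^k V → Hom(Λ^r V, Λ^{r+k} V) given by wedge multiplication, ω ↦ (η ↦ ω ∧ η). Fix a basis e₁,...,e_n of V and set E := θ_{k,r}(e₁∧...∧e_k) and E' := θ_{k,r}(e_{n-k+1}∧...∧e_n). Then the kernel of E + E' has strictly smaller dimension than the kernel of E; in particular θ_{k,r} is not a space of matrices of constant rank. -/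
open ExteriorAlgebra

namespace Stmt16

variable {n : ℕ} {V : Type*} [AddCommGroup V] [Module ℂ V] (e : Module.Basis (Fin n) ℂ V)

/-- product of `ι (e i)` over a list of indices -/
noncomputable def P (l : List (Fin n)) : ExteriorAlgebra ℂ V :=
  (l.map fun i => ExteriorAlgebra.ι ℂ (e i)).prod

lemma P_cons (i : Fin n) (l : List (Fin n)) :
    P e (i :: l) = ExteriorAlgebra.ι ℂ (e i) * P e l := by
  simp [P]

lemma P_append (l₁ l₂ : List (Fin n)) : P e (l₁ ++ l₂) = P e l₁ * P e l₂ := by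
  simp [P]

lemma ι_anticomm (x y : V) :
    ExteriorAlgebra.ι ℂ x * ExteriorAlgebra.ι ℂ y
      = -(ExteriorAlgebra.ι ℂ y * ExteriorAlgebra.ι ℂ x) :=
  eq_neg_of_add_eq_zero_left (ExteriorAlgebra.ι_add_mul_swap x y)

lemma P_perm {l₁ l₂ : List (Fin n)} (h : l₁.Perm l₂) :
    P e l₁ = P e l₂ ∨ P e l₁ = -P e l₂ := by
  induction h with
  | nil => exact Or.inl rfl
  | cons x h ih =>
      rw [P_cons, P_cons]
      rcases ih with h' | h'
      · exact Or.inl (by rw [h'])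
      · exact Or.inr (by rw [h', mul_neg])
  | swap x y l =>
      right
      rw [P_cons, P_cons, P_cons, P_cons, ← mul_assoc, ← mul_assoc,
        ι_anticomm (e y) (e x), neg_mul]
  | trans h1 h2 ih1 ih2 =>
      rcases ih1 with h' | h' <;> rcases ih2 with h'' | h'' <;>
        simp [h', h'', neg_neg]

lemma P_not_nodup {l : List (Fin n)} (h : ¬ l.Nodup) : P e l = 0 := by
  rw [List.nodup_iff_count_le_one] at h
  push_neg at h
  obtain ⟨x, hx⟩ := h
  have h1 : x ∈ l := List.count_pos_iff.mp (by omega)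
  have h2 : x ∈ l.erase x := by
    have := List.count_erase_self (a := x) (l := l)
    exact List.count_pos_iff.mp (by omega)
  have hp : l.Perm (x :: x :: (l.erase x).erase x) :=
    (List.perm_cons_erase h1).trans ((List.perm_cons_erase h2).cons x)
  have hz : P e (x :: x :: (l.erase x).erase x) = 0 := by
    rw [P_cons, P_cons, ← mul_assoc, ExteriorAlgebra.ι_sq_zero, zero_mul]
  rcases P_perm e hp with h' | h' <;> simp [h', hz]

/-- the sorted enumeration of a finset -/
noncomputable def sig (S : Finset (Fin n)) : Fin S.card → Fin n :=
  fun a => ((S.orderIsoOfFin rfl) a : Fin n)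

lemma sig_inj (S : Finset (Fin n)) : Function.Injective (sig S) :=
  Subtype.val_injective.comp (S.orderIsoOfFin rfl).injective

lemma sig_mem (S : Finset (Fin n)) (a : Fin S.card) : sig S a ∈ S :=
  ((S.orderIsoOfFin rfl) a).2

lemma ofFn_sig_toFinset (S : Finset (Fin n)) :
    (List.ofFn (sig S)).toFinset = S := by
  ext a
  simp only [List.mem_toFinset, List.mem_ofFn]
  constructor
  · rintro ⟨b, rfl⟩; exact sig_mem S b
  · intro ha
    exact ⟨(S.orderIsoOfFin rfl).symm ⟨a, ha⟩, by simp [sig]⟩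

lemma ofFn_sig_nodup (S : Finset (Fin n)) : (List.ofFn (sig S)).Nodup :=
  List.nodup_ofFn.mpr (sig_inj S)

/-- the basis monomial attached to a finset of indices -/
noncomputable def mon (S : Finset (Fin n)) : ExteriorAlgebra ℂ V :=
  ExteriorAlgebra.ιMulti ℂ S.card (fun a => e (sig S a))

lemma mon_eq_P (S : Finset (Fin n)) : mon e S = P e (List.ofFn (sig S)) := by
  rw [mon, ExteriorAlgebra.ιMulti_apply, P, List.map_ofFn]
  rfl

lemma P_nodup {l : List (Fin n)} (h : l.Nodup) :
    ∃ c : ℂ, c ≠ 0 ∧ P e l = c • mon e l.toFinset := by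
  have hperm : l.Perm (List.ofFn (sig l.toFinset)) :=
    List.perm_of_nodup_nodup_toFinset_eq h (ofFn_sig_nodup _)
      (by rw [ofFn_sig_toFinset])
  rcases P_perm e hperm with h' | h'
  · exact ⟨1, one_ne_zero, by rw [one_smul, mon_eq_P, h']⟩
  · exact ⟨-1, by norm_num, by rw [mon_eq_P, h', neg_smul, one_smul]⟩

lemma mon_mem (S : Finset (Fin n)) : mon e S ∈ ⋀[ℂ]^(S.card) V :=
  ExteriorAlgebra.ιMulti_range ℂ S.card ⟨_, rfl⟩

lemma mon_mul_disjoint {S T : Finset (Fin n)} (h : Disjoint S T) :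
    ∃ c : ℂ, c ≠ 0 ∧ mon e S * mon e T = c • mon e (S ∪ T) := by
  have happ : mon e S * mon e T = P e (List.ofFn (sig S) ++ List.ofFn (sig T)) := by
    rw [P_append, mon_eq_P, mon_eq_P]
  have hnd : (List.ofFn (sig S) ++ List.ofFn (sig T)).Nodup := by
    rw [List.nodup_append]
    refine ⟨ofFn_sig_nodup S, ofFn_sig_nodup T, ?_⟩
    intro a ha b' hb hab; subst hab
    rw [List.mem_ofFn] at ha hb
    obtain ⟨b, rfl⟩ := ha
    obtain ⟨c, hc⟩ := hb
    exact (Finset.disjoint_left.mp h (sig_mem S b)) (hc ▸ sig_mem T c)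
  obtain ⟨c, hc, hPc⟩ := P_nodup e hnd
  refine ⟨c, hc, ?_⟩
  rw [happ, hPc, List.toFinset_append, ofFn_sig_toFinset, ofFn_sig_toFinset]

lemma mon_mul_not_disjoint {S T : Finset (Fin n)} (h : ¬ Disjoint S T) :
    mon e S * mon e T = 0 := by
  have happ : mon e S * mon e T = P e (List.ofFn (sig S) ++ List.ofFn (sig T)) := by
    rw [P_append, mon_eq_P, mon_eq_P]
  rw [happ]
  apply P_not_nodup
  intro hnd
  rw [List.nodup_append] at hnd
  obtain ⟨x, hxS, hxT⟩ := Finset.not_disjoint_iff.mp h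
  have hS : x ∈ List.ofFn (sig S) := by
    rw [List.mem_ofFn]; exact Set.mem_range.mpr ⟨(S.orderIsoOfFin rfl).symm ⟨x, hxS⟩, by simp [sig]⟩
  have hT : x ∈ List.ofFn (sig T) := by
    rw [List.mem_ofFn]; exact Set.mem_range.mpr ⟨(T.orderIsoOfFin rfl).symm ⟨x, hxT⟩, by simp [sig]⟩
  exact hnd.2.2 x hS x hT rfl

noncomputable def altF (T : Finset (Fin n)) (i : ℕ) : V [⋀^Fin i]→ₗ[ℂ] ℂ :=
  if h : T.card = i then
    Matrix.detRowAlternating.compLinearMap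
      (LinearMap.pi (fun a : Fin i => e.coord ((T.orderIsoOfFin h a : Fin n))))
  else 0

noncomputable def phi (T : Finset (Fin n)) : ExteriorAlgebra ℂ V →ₗ[ℂ] ℂ :=
  ExteriorAlgebra.liftAlternating (altF e T)

lemma phi_iMulti (T : Finset (Fin n)) {m : ℕ} (v : Fin m → V) :
    phi e T (ExteriorAlgebra.ιMulti ℂ m v) = altF e T m v :=
  ExteriorAlgebra.liftAlternating_apply_ιMulti _ v

lemma altF_apply (T : Finset (Fin n)) {m : ℕ} (h : T.card = m) (v : Fin m → V) :
    altF e T m v =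
      Matrix.det (Matrix.of fun a b => e.repr (v a) ((T.orderIsoOfFin h b : Fin n))) := by
  rw [altF, dif_pos h]
  rfl

lemma phi_mon (S T : Finset (Fin n)) :
    phi e T (mon e S) = if S = T then 1 else 0 := by
  rw [mon, phi_iMulti]
  by_cases hc : T.card = S.card
  · rw [altF_apply e T hc]
    have hentry : ∀ a b, e.repr (e (sig S a)) ((T.orderIsoOfFin hc b : Fin n))
        = if sig S a = (T.orderIsoOfFin hc b : Fin n) then 1 else 0 := by
      intro a b
      rw [e.repr_self, Finsupp.single_apply]
    by_cases hST : S = T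
    · subst hST
      rw [if_pos rfl]
      have : (Matrix.of fun a b => e.repr (e (sig S a)) ((S.orderIsoOfFin hc b : Fin n)))
          = (1 : Matrix (Fin S.card) (Fin S.card) ℂ) := by
        ext a b
        rw [Matrix.of_apply, hentry, Matrix.one_apply]
        congr 1
        simp only [eq_iff_iff]
        constructor
        · intro h
          exact (S.orderIsoOfFin rfl).injective (Subtype.val_injective (by simpa [sig] using h))
        · rintro rfl; rfl
      rw [this, Matrix.det_one]
    · rw [if_neg hST]
      -- find x ∈ S \ T
      have hx : ∃ x ∈ S, x ∉ T := by
        by_contra hcon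
        push_neg at hcon
        exact hST (Finset.eq_of_subset_of_card_le hcon (le_of_eq hc))
      obtain ⟨x, hxS, hxT⟩ := hx
      apply Matrix.det_eq_zero_of_row_eq_zero ((S.orderIsoOfFin rfl).symm ⟨x, hxS⟩)
      intro b
      rw [Matrix.of_apply, hentry]
      have : sig S ((S.orderIsoOfFin rfl).symm ⟨x, hxS⟩) = x := by simp [sig]
      rw [this, if_neg]
      intro hcontra
      exact hxT (hcontra ▸ (T.orderIsoOfFin hc b).2)
  · rw [altF, dif_neg hc, if_neg (fun h => hc (by rw [h]))]
    rfl

/-- global linear independence of the monomials -/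
lemma mon_li : LinearIndependent ℂ (fun S : Finset (Fin n) => mon e S) := by
  rw [Fintype.linearIndependent_iff]
  intro g hg T
  have := congrArg (phi e T) hg
  rw [map_sum, map_zero] at this
  simp only [map_smul, phi_mon, smul_eq_mul] at this
  rw [Finset.sum_congr rfl (fun x _ => mul_ite_zero (x = T) (g x) 1)] at this
  simp only [mul_one] at this
  rwa [Finset.sum_ite_eq' Finset.univ T g, if_pos (Finset.mem_univ T)] at this

lemma mon_ne_zero (S : Finset (Fin n)) : mon e S ≠ 0 := by
  intro h
  have := phi_mon e S S
  rw [h, map_zero, if_pos rfl] at this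
  exact one_ne_zero this.symm

lemma finrank_span_mon (𝔉 : Finset (Finset (Fin n))) :
    Module.finrank ℂ ↥(Submodule.span ℂ (mon e '' ↑𝔉)) = 𝔉.card := by
  have himg : mon e '' ↑𝔉 = Set.range ((fun S : Finset (Fin n) => mon e S) ∘ (Subtype.val : ↥𝔉 → _)) := by
    rw [Set.range_comp, Subtype.range_coe]
  rw [himg, finrank_span_eq_card (mon_li e |>.comp Subtype.val Subtype.val_injective),
    Fintype.card_coe]


lemma span_mon (m : ℕ) :
    ⋀[ℂ]^m V = Submodule.span ℂ (mon e '' {S : Finset (Fin n) | S.card = m}) := by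
  apply le_antisymm
  · rw [← ExteriorAlgebra.ιMulti_span_fixedDegree]
    rw [Submodule.span_le]
    rintro _ ⟨v, rfl⟩
    -- expand v in the basis
    have hv : (fun a => v a) = fun a => ∑ j : Fin n, e.repr (v a) j • e j := by
      funext a
      rw [Module.Basis.sum_repr]
    have hexp : ExteriorAlgebra.ιMulti ℂ m v
        = ∑ c : Fin m → Fin n, (∏ a, e.repr (v a) (c a)) •
            ExteriorAlgebra.ιMulti ℂ m (fun a => e (c a)) := by
      conv_lhs => rw [show v = fun a => ∑ j : Fin n, e.repr (v a) j • e j from funext fun a => (Module.Basis.sum_repr e (v a)).symm]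
      rw [show (ExteriorAlgebra.ιMulti ℂ m (M := V)) (fun a => ∑ j : Fin n, e.repr (v a) j • e j)
          = (ExteriorAlgebra.ιMulti ℂ m (M := V)).toMultilinearMap
              (fun a => ∑ j : Fin n, e.repr (v a) j • e j) from rfl]
      rw [MultilinearMap.map_sum]
      congr 1
      funext c
      rw [MultilinearMap.map_smul_univ]
      rfl
    rw [SetLike.mem_coe, hexp]
    apply Submodule.sum_mem
    intro c _
    apply Submodule.smul_mem
    by_cases hc : Function.Injective c
    · have hP : ExteriorAlgebra.ιMulti ℂ m (fun a => e (c a)) = P e (List.ofFn c) := by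
        rw [ExteriorAlgebra.ιMulti_apply, P, List.map_ofFn]
        rfl
      have hnd : (List.ofFn c).Nodup := List.nodup_ofFn.mpr hc
      obtain ⟨d, hd0, hdP⟩ := P_nodup e hnd
      rw [hP, hdP]
      apply Submodule.smul_mem
      apply Submodule.subset_span
      refine ⟨(List.ofFn c).toFinset, ?_, rfl⟩
      simp only [Set.mem_setOf_eq]
      rw [List.toFinset_card_of_nodup hnd, List.length_ofFn]
    · have hni : ¬ Function.Injective (fun a => e (c a)) := by
        intro h
        exact hc fun a b hab => h (congrArg e hab)
      have hz : (ExteriorAlgebra.ιMulti ℂ m) (fun a => e (c a)) = 0 :=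
        AlternatingMap.map_eq_zero_of_not_injective _ _ hni
      rw [hz]
      exact Submodule.zero_mem _
  · rw [Submodule.span_le]
    rintro _ ⟨S, hS, rfl⟩
    have := mon_mem e S
    rwa [Set.mem_setOf_eq.mp hS] at this



include e in
lemma exteriorPower_fd (m : ℕ) : FiniteDimensional ℂ ↥(⋀[ℂ]^m V) := by
  rw [span_mon e m]
  exact FiniteDimensional.span_of_finite ℂ ((Set.toFinite _).image _)

lemma finrank_mono' {M : Type*} [AddCommGroup M] [Module ℂ M]
    {p q : Submodule ℂ M} (h : p ≤ q) [FiniteDimensional ℂ ↥q] :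
    Module.finrank ℂ ↥p ≤ Module.finrank ℂ ↥q := by
  rw [← (Submodule.comapSubtypeEquivOfLe h).finrank_eq]
  exact Submodule.finrank_le _

lemma rank_nullity {M : Type*} [AddCommGroup M] [Module ℂ M]
    (W : Submodule ℂ M) [FiniteDimensional ℂ ↥W] (f : M →ₗ[ℂ] M) :
    Module.finrank ℂ ↥(Submodule.map f W) + Module.finrank ℂ ↥(W ⊓ LinearMap.ker f)
      = Module.finrank ℂ ↥W := by
  have h1 := LinearMap.finrank_range_add_finrank_ker (f ∘ₗ W.subtype)
  rw [LinearMap.range_comp, Submodule.range_subtype, LinearMap.ker_comp] at h1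
  have h2 : Submodule.comap W.subtype (LinearMap.ker f)
      = Submodule.comap W.subtype (W ⊓ LinearMap.ker f) := by
    rw [Submodule.comap_inf, Submodule.comap_subtype_self, top_inf_eq]
  rw [h2, (Submodule.comapSubtypeEquivOfLe
    (inf_le_left : W ⊓ LinearMap.ker f ≤ W)).finrank_eq] at h1
  exact h1

end Stmt16




/-- Let `V` be an `n`-dimensional complex vector space, `k, r ≥ 1` with
`2 ≤ k`, `r + k < n` and `2k ≤ n`, and consider the `GL(V)`-equivariant space of matrices
`θ_{k,r} : Λ^k V → Hom(Λ^r V, Λ^{r+k} V)` given by wedge multiplication.  With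
`E := θ_{k,r}(e₁∧⋯∧e_k)` and `E' := θ_{k,r}(e_{n-k+1}∧⋯∧e_n)` (realised inside the
exterior algebra, acting by left multiplication on the degree-`r` part `Λ^r V`), the
kernel of `E + E'` is strictly smaller than the kernel of `E`; in particular `θ_{k,r}`
is not of constant rank. -/
theorem stmt_16 (n k r : ℕ) (hk2 : 2 ≤ k) (hr : 1 ≤ r) (hrk : r + k < n) (h2k : 2 * k ≤ n)
    (V : Type*) [AddCommGroup V] [Module ℂ V] (e : Module.Basis (Fin n) ℂ V) :
    let ιV : V →ₗ[ℂ] ExteriorAlgebra ℂ V := ExteriorAlgebra.ι ℂ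
    let Λ : ℕ → Submodule ℂ (ExteriorAlgebra ℂ V) := fun m => (LinearMap.range ιV) ^ m
    let ω : ExteriorAlgebra ℂ V :=
      (((List.finRange k).map (fun i => ιV (e (Fin.castLE (by omega) i)))).prod)
    let ω' : ExteriorAlgebra ℂ V :=
      (((List.finRange k).map (fun i => ιV (e ⟨n - k + i.1, by omega⟩))).prod)
    (Module.finrank ℂ ↥(Λ r ⊓ LinearMap.ker (LinearMap.mulLeft ℂ (ω + ω'))) <
      Module.finrank ℂ ↥(Λ r ⊓ LinearMap.ker (LinearMap.mulLeft ℂ ω)))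
    ∧ ¬ ∃ c : ℕ, ∀ x ∈ Λ k, x ≠ 0 →
        Module.finrank ℂ ↥(Submodule.map (LinearMap.mulLeft ℂ x) (Λ r)) = c := by
  intro ιV Λ ω ω'
  classical
  open Stmt16 in
  have hkn : k ≤ n := by omega
  haveI fdr : FiniteDimensional ℂ ↥(⋀[ℂ]^r V) := exteriorPower_fd e r
  set K : Finset (Fin n) := Finset.univ.filter (fun i => i.1 < k) with hKdef
  set L : Finset (Fin n) := Finset.univ.filter (fun i => n - k ≤ i.1) with hLdef
  have memK : ∀ i : Fin n, i ∈ K ↔ i.1 < k := by intro i; simp [hKdef]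
  have memL : ∀ i : Fin n, i ∈ L ↔ n - k ≤ i.1 := by intro i; simp [hLdef]
  -- ω as a monomial
  have hωP : ω = P e ((List.finRange k).map (Fin.castLE hkn)) := by
    simp only [P, List.map_map]; rfl
  have hKnd : ((List.finRange k).map (Fin.castLE hkn)).Nodup :=
    (List.nodup_finRange k).map (Fin.castLE_injective hkn)
  have hKto : ((List.finRange k).map (Fin.castLE hkn)).toFinset = K := by
    ext a
    simp only [List.mem_toFinset, List.mem_map, List.mem_finRange, true_and]
    rw [memK]
    constructor
    · rintro ⟨i, rfl⟩; exact i.2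
    · intro ha; exact ⟨⟨a.1, ha⟩, Fin.ext rfl⟩
  obtain ⟨cK, hcK, hωK⟩ : ∃ c : ℂ, c ≠ 0 ∧ ω = c • mon e K := by
    obtain ⟨c, hc, hP⟩ := P_nodup e hKnd
    exact ⟨c, hc, by rw [hωP, hP, hKto]⟩
  have hKcard : K.card = k := by
    rw [← hKto, List.toFinset_card_of_nodup hKnd, List.length_map, List.length_finRange]
  -- ω' as a monomial
  have hω'P : ω' = P e ((List.finRange k).map
      (fun i : Fin k => (⟨n - k + i.1, by omega⟩ : Fin n))) := by
    simp only [P, List.map_map]; rfl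
  have hf'inj : Function.Injective (fun i : Fin k => (⟨n - k + i.1, by omega⟩ : Fin n)) := by
    intro i j hij
    have : n - k + i.1 = n - k + j.1 := congrArg Fin.val hij
    exact Fin.ext (by omega)
  have hLnd : ((List.finRange k).map
      (fun i : Fin k => (⟨n - k + i.1, by omega⟩ : Fin n))).Nodup :=
    (List.nodup_finRange k).map hf'inj
  have hLto : ((List.finRange k).map
      (fun i : Fin k => (⟨n - k + i.1, by omega⟩ : Fin n))).toFinset = L := by
    ext a
    simp only [List.mem_toFinset, List.mem_map, List.mem_finRange, true_and]
    rw [memL]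
    constructor
    · rintro ⟨i, rfl⟩; simp
    · intro ha
      refine ⟨⟨a.1 - (n - k), by omega⟩, Fin.ext ?_⟩
      simp
      omega
  obtain ⟨cL, hcL, hω'L⟩ : ∃ c : ℂ, c ≠ 0 ∧ ω' = c • mon e L := by
    obtain ⟨c, hc, hP⟩ := P_nodup e hLnd
    exact ⟨c, hc, by rw [hω'P, hP, hLto]⟩
  have hLcard : L.card = k := by
    rw [← hLto, List.toFinset_card_of_nodup hLnd, List.length_map, List.length_finRange]
  have hKL : Disjoint K L := by
    rw [Finset.disjoint_left]
    intro i hiK hiL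
    rw [memK i] at hiK; rw [memL i] at hiL; omega
  -- special elements
  have hxlt : n - k < n := by omega
  have hylt : n - 1 < n := by omega
  set x : Fin n := ⟨n - k, hxlt⟩ with hxdef
  set y : Fin n := ⟨n - 1, hylt⟩ with hydef
  have hxv : x.1 = n - k := rfl
  have hyv : y.1 = n - 1 := rfl
  have hxy : x ≠ y := by
    intro h
    have := congrArg Fin.val h
    rw [hxv, hyv] at this; omega
  have hxK : x ∉ K := by rw [memK, hxv]; omega
  have hyK : y ∉ K := by rw [memK, hyv]; omega
  have hxL : x ∈ L := by rw [memL, hxv]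
  have hyL : y ∈ L := by rw [memL, hyv]; omega
  -- build S₀
  have hxyKc : ({x, y} : Finset (Fin n)) ⊆ Kᶜ := by
    intro a ha
    rcases Finset.mem_insert.mp ha with rfl | ha
    · exact Finset.mem_compl.mpr hxK
    · rw [Finset.mem_singleton] at ha; subst ha; exact Finset.mem_compl.mpr hyK
  have hcard_aux : r - 1 ≤ (Kᶜ \ {x, y}).card := by
    rw [Finset.card_sdiff_of_subset hxyKc, Finset.card_compl, hKcard, Fintype.card_fin,
      Finset.card_insert_of_notMem (by simp [hxy]), Finset.card_singleton]
    omega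
  obtain ⟨t, hts, htc⟩ := Finset.exists_subset_card_eq hcard_aux
  set S₀ : Finset (Fin n) := insert x t with hS₀def
  have hxt : x ∉ t := by
    intro h
    have := hts h
    rw [Finset.mem_sdiff] at this
    exact this.2 (Finset.mem_insert_self x {y})
  have hS₀card : S₀.card = r := by
    rw [hS₀def, Finset.card_insert_of_notMem hxt, htc]; omega
  have hKS₀ : Disjoint K S₀ := by
    rw [Finset.disjoint_right]
    intro a ha
    rcases Finset.mem_insert.mp ha with rfl | ha
    · exact hxK
    · have := hts ha
      rw [Finset.mem_sdiff] at this
      exact Finset.mem_compl.mp this.1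
  have hxS₀ : x ∈ S₀ := Finset.mem_insert_self x t
  have hLS₀ : ¬ Disjoint L S₀ := Finset.not_disjoint_iff.mpr ⟨x, hxL, hxS₀⟩
  have hyS₀ : y ∉ S₀ := by
    intro h
    rcases Finset.mem_insert.mp h with h | h
    · exact hxy h.symm
    · have := hts h
      rw [Finset.mem_sdiff] at this
      exact this.2 (by simp)
  have hLnsub : ¬ L ⊆ K ∪ S₀ := by
    intro h
    rcases Finset.mem_union.mp (h hyL) with h' | h'
    · exact hyK h'
    · exact hyS₀ h'
  -- index sets
  set Z : Finset (Finset (Fin n)) := Finset.powersetCard r Lᶜ with hZdef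
  have hZmem : ∀ S ∈ Z, S.card = r ∧ Disjoint L S := by
    intro S hS
    rw [hZdef, Finset.mem_powersetCard] at hS
    exact ⟨hS.2, Finset.disjoint_left.mpr fun a haL haS =>
      (Finset.mem_compl.mp (hS.1 haS)) haL⟩
  have hS₀Z : S₀ ∉ Z := by
    intro h
    rw [hZdef, Finset.mem_powersetCard] at h
    exact (Finset.mem_compl.mp (h.1 hxS₀)) hxL
  set Z' : Finset (Finset (Fin n)) := insert S₀ Z with hZ'def
  have hZ'card : Z'.card = (n - k).choose r + 1 := by
    rw [hZ'def, Finset.card_insert_of_notMem hS₀Z, hZdef, Finset.card_powersetCard,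
      Finset.card_compl, hLcard, Fintype.card_fin]
  have hZ'cardS : ∀ S ∈ Z', Finset.card S = r := by
    intro S hS
    rcases Finset.mem_insert.mp hS with rfl | hS
    · exact hS₀card
    · exact (hZmem S hS).1
  -- phi computations
  have hφKS : ∀ (S T : Finset (Fin n)), T ∈ Z → S ∈ Z' →
      phi e (T ∪ L) (mon e K * mon e S) = 0 := by
    intro S T hT hS
    by_cases hd : Disjoint K S
    · obtain ⟨c, hc0, hcm⟩ := mon_mul_disjoint e hd
      rw [hcm, map_smul, phi_mon, if_neg, smul_zero]
      intro hEq
      have hLsub : L ⊆ K ∪ S := by rw [hEq]; exact Finset.subset_union_right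
      rcases Finset.mem_insert.mp hS with rfl | hSZ
      · exact hLnsub hLsub
      · rcases Finset.mem_union.mp (hLsub hxL) with h | h
        · exact hxK h
        · exact (Finset.disjoint_left.mp (hZmem S hSZ).2 hxL) h
    · rw [mon_mul_not_disjoint e hd, map_zero]
  have hφLS : ∀ (S T : Finset (Fin n)), T ∈ Z → S ∈ Z →
      ∃ c : ℂ, c ≠ 0 ∧ phi e (T ∪ L) (mon e L * mon e S) = if S = T then c else 0 := by
    intro S T hT hS
    obtain ⟨c, hc0, hcm⟩ := mon_mul_disjoint e (hZmem S hS).2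
    refine ⟨c, hc0, ?_⟩
    rw [hcm, map_smul, phi_mon, smul_eq_mul]
    by_cases hST : S = T
    · subst hST
      rw [if_pos (Finset.union_comm L S), if_pos rfl, mul_one]
    · rw [if_neg hST, if_neg, mul_zero]
      intro hEq
      apply hST
      have h1 : (L ∪ S) \ L = S := Finset.union_sdiff_cancel_left (hZmem S hS).2
      have h2 : (L ∪ T) \ L = T := Finset.union_sdiff_cancel_left (hZmem T hT).2
      rw [← h1, hEq, Finset.union_comm T L, h2]
  -- the two multiplication operators
  set f₁ := LinearMap.mulLeft ℂ ω with hf₁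
  set f₂ := LinearMap.mulLeft ℂ (ω + ω') with hf₂
  have hval : ∀ S : Finset (Fin n), f₂ (mon e S)
      = cK • (mon e K * mon e S) + cL • (mon e L * mon e S) := by
    intro S
    rw [hf₂, LinearMap.mulLeft_apply, hωK, hω'L, add_mul, smul_mul_assoc, smul_mul_assoc]
  -- linear independence of the images under f₂
  have hv_li : LinearIndependent ℂ (fun S : ↥Z' => f₂ (mon e S.1)) := by
    rw [Fintype.linearIndependent_iff]
    intro a hsum
    have hZzero : ∀ (T : Finset (Fin n)) (hT : T ∈ Z),
        a ⟨T, Finset.mem_insert_of_mem hT⟩ = 0 := by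
      intro T hT
      have h0 := congrArg (phi e (T ∪ L)) hsum
      rw [map_sum, map_zero] at h0
      obtain ⟨cT, hcT0, hcTeq⟩ := hφLS T T hT hT
      rw [Finset.sum_eq_single_of_mem (⟨T, Finset.mem_insert_of_mem hT⟩ : ↥Z')
        (Finset.mem_univ _) ?_] at h0
      · rw [map_smul, hval, map_add, map_smul, map_smul,
          hφKS T T hT (Finset.mem_insert_of_mem hT), hcTeq, if_pos rfl] at h0
        simp only [smul_eq_mul, mul_zero, zero_add] at h0
        rcases mul_eq_zero.mp h0 with h | h
        · exact h
        · exact absurd h (mul_ne_zero hcL hcT0)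
      · intro S _ hSne
        have hS1ne : S.1 ≠ T := fun h => hSne (Subtype.ext h)
        rw [map_smul, hval, map_add, map_smul, map_smul, hφKS S.1 T hT S.2]
        rcases Finset.mem_insert.mp S.2 with h | h
        · rw [h, mon_mul_not_disjoint e hLS₀, map_zero]
          simp
        · obtain ⟨cS, hcS0, hcSeq⟩ := hφLS S.1 T hT h
          rw [hcSeq, if_neg hS1ne]
          simp
    intro i
    rcases Finset.mem_insert.mp i.2 with hi | hi
    · -- i.1 = S₀
      have h0 := congrArg (phi e (K ∪ S₀)) hsum
      rw [map_sum, map_zero] at h0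
      rw [Finset.sum_eq_single_of_mem i (Finset.mem_univ _) ?_] at h0
      · obtain ⟨c, hc0, hcm⟩ := mon_mul_disjoint e hKS₀
        rw [map_smul, hval, hi, map_add, map_smul, map_smul,
          mon_mul_not_disjoint e hLS₀, map_zero, smul_zero, add_zero,
          hcm, map_smul, phi_mon, if_pos rfl] at h0
        simp only [smul_eq_mul, mul_one] at h0
        rcases mul_eq_zero.mp h0 with h | h
        · exact h
        · exact absurd h (mul_ne_zero hcK hc0)
      · intro S _ hSne
        rcases Finset.mem_insert.mp S.2 with h | h
        · exact absurd (Subtype.ext (h.trans hi.symm)) hSne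
        · have hz := hZzero S.1 h
          rw [show (⟨S.1, Finset.mem_insert_of_mem h⟩ : ↥Z') = S from Subtype.ext rfl] at hz
          rw [hz, zero_smul, map_zero]
    · have hz := hZzero i.1 hi
      rwa [show (⟨i.1, Finset.mem_insert_of_mem hi⟩ : ↥Z') = i from Subtype.ext rfl] at hz
  -- rank bounds
  set 𝔐 : Finset (Finset (Fin n)) := (Finset.powersetCard r Kᶜ).image (fun S => K ∪ S) with h𝔐
  have hrank1 : Module.finrank ℂ ↥(Submodule.map f₁ (⋀[ℂ]^r V)) ≤ (n - k).choose r := by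
    have hle : Submodule.map f₁ (⋀[ℂ]^r V) ≤ Submodule.span ℂ (mon e '' ↑𝔐) := by
      rw [span_mon e r, Submodule.map_span, Submodule.span_le]
      rintro _ ⟨_, ⟨S, hS, rfl⟩, rfl⟩
      rw [SetLike.mem_coe, hf₁, LinearMap.mulLeft_apply, hωK, smul_mul_assoc]
      by_cases hd : Disjoint K S
      · obtain ⟨c, hc0, hcm⟩ := mon_mul_disjoint e hd
        rw [hcm, smul_smul]
        apply Submodule.smul_mem
        apply Submodule.subset_span
        refine ⟨K ∪ S, ?_, rfl⟩
        rw [Finset.mem_coe, h𝔐, Finset.mem_image]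
        refine ⟨S, ?_, rfl⟩
        rw [Finset.mem_powersetCard]
        exact ⟨fun a ha => Finset.mem_compl.mpr (Finset.disjoint_right.mp hd ha), hS⟩
      · rw [mon_mul_not_disjoint e hd, smul_zero]
        exact Submodule.zero_mem _
    haveI : FiniteDimensional ℂ ↥(Submodule.span ℂ (mon e '' ↑𝔐)) :=
      FiniteDimensional.span_of_finite ℂ ((Set.toFinite _).image _)
    calc Module.finrank ℂ ↥(Submodule.map f₁ (⋀[ℂ]^r V))
        ≤ Module.finrank ℂ ↥(Submodule.span ℂ (mon e '' ↑𝔐)) := finrank_mono' hle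
      _ = 𝔐.card := finrank_span_mon e 𝔐
      _ ≤ (Finset.powersetCard r Kᶜ).card := Finset.card_image_le
      _ = (n - k).choose r := by
          rw [Finset.card_powersetCard, Finset.card_compl, hKcard, Fintype.card_fin]
  have hrank2 : (n - k).choose r + 1 ≤ Module.finrank ℂ ↥(Submodule.map f₂ (⋀[ℂ]^r V)) := by
    have hle : Submodule.span ℂ (Set.range (fun S : ↥Z' => f₂ (mon e S.1)))
        ≤ Submodule.map f₂ (⋀[ℂ]^r V) := by
      rw [Submodule.span_le]
      rintro _ ⟨S, rfl⟩
      have hm := mon_mem e S.1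
      rw [hZ'cardS S.1 S.2] at hm
      exact Submodule.mem_map_of_mem hm
    calc (n - k).choose r + 1 = Z'.card := hZ'card.symm
      _ = Fintype.card ↥Z' := (Fintype.card_coe _).symm
      _ = Module.finrank ℂ ↥(Submodule.span ℂ (Set.range (fun S : ↥Z' => f₂ (mon e S.1)))) :=
          (finrank_span_eq_card hv_li).symm
      _ ≤ Module.finrank ℂ ↥(Submodule.map f₂ (⋀[ℂ]^r V)) := finrank_mono' hle
  have hRN1 := rank_nullity (⋀[ℂ]^r V) f₁
  have hRN2 := rank_nullity (⋀[ℂ]^r V) f₂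
  constructor
  · show Module.finrank ℂ ↥(⋀[ℂ]^r V ⊓ LinearMap.ker f₂) <
      Module.finrank ℂ ↥(⋀[ℂ]^r V ⊓ LinearMap.ker f₁)
    omega
  · rintro ⟨c, hc⟩
    have hωmem : ω ∈ ⋀[ℂ]^k V := by
      rw [hωK]
      apply Submodule.smul_mem
      have := mon_mem e K
      rwa [hKcard] at this
    have hω'mem : ω' ∈ ⋀[ℂ]^k V := by
      rw [hω'L]
      apply Submodule.smul_mem
      have := mon_mem e L
      rwa [hLcard] at this
    have hφω : phi e K ω = cK := by
      rw [hωK, map_smul, phi_mon, if_pos rfl, smul_eq_mul, mul_one]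
    have hωne : ω ≠ 0 := fun h => hcK (by rw [h, map_zero] at hφω; exact hφω.symm)
    have hKLne : K ≠ L := by
      intro h
      have h0K : (⟨0, by omega⟩ : Fin n) ∈ K := (memK _).mpr (show 0 < k by omega)
      have h0L := h ▸ h0K
      rw [memL] at h0L
      have : n - k ≤ 0 := h0L
      omega
    have hsne : ω + ω' ≠ 0 := by
      intro h
      have h0 := congrArg (phi e K) h
      rw [map_zero, map_add, hωK, hω'L, map_smul, map_smul, phi_mon, phi_mon,
        if_pos rfl, if_neg (Ne.symm hKLne)] at h0
      simp only [smul_eq_mul, mul_one, mul_zero, add_zero] at h0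
      exact hcK h0
    have e1 : Module.finrank ℂ ↥(Submodule.map f₁ (⋀[ℂ]^r V)) = c := hc ω hωmem hωne
    have e2 : Module.finrank ℂ ↥(Submodule.map f₂ (⋀[ℂ]^r V)) = c :=
      hc (ω + ω') (Submodule.add_mem _ hωmem hω'mem) hsne
    omega
end

section
/- For the group SL₂ and natural numbers m ≤ n, let V(j) denote the irreducible representation of highest weight j. For 0 ≤ k ≤ m, the highest weight vector of the summand V(n-m+2k) in Hom(V(m), V(n)) ≅ ⊕_{k=0}^{m} V(n-m+2k) (Clebsch–Gordan) corresponds to an (m+1)×(n+1) matrix of rank m+1-k; in particular its corank (as a map V(m) → V(n)) is k. -/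
/-- The raising operator `e` of `sl₂` on the irreducible representation `V(n)` in the
standard weight basis `v_j = f^j · v_hw`, `j = 0, …, n`:  `e·v_j = j(n-j+1)·v_{j-1}`. -/
def sl2E (n : ℕ) : Matrix (Fin (n + 1)) (Fin (n + 1)) ℂ :=
  fun i j => if i.1 + 1 = j.1 then ((j.1 * (n + 1 - j.1) : ℕ) : ℂ) else 0

/-- The Cartan operator `h` of `sl₂` on `V(n)` in the standard weight basis:
`h·v_j = (n-2j)·v_j`. -/
def sl2H (n : ℕ) : Matrix (Fin (n + 1)) (Fin (n + 1)) ℂ :=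
  fun i j => if i = j then ((n : ℂ) - 2 * (i.1 : ℂ)) else 0

/-- Coefficients of the highest weight matrix. -/
def hwc (m n k i : ℕ) : ℕ :=
  (∏ t ∈ Finset.range i, (k + 1 + t) * (m - k - t)) *
  (∏ t ∈ Finset.Ico i (m - k), (t + 1) * (n - t))

lemma hwc_pos {m n k i : ℕ} (hk : k ≤ m) (hmn : m ≤ n) (hi : i ≤ m - k) :
    0 < hwc m n k i := by
  apply Nat.mul_pos
  · apply Finset.prod_pos
    intro t ht
    have : t < m - k := lt_of_lt_of_le (Finset.mem_range.mp ht) hi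
    exact Nat.mul_pos (by omega) (by omega)
  · apply Finset.prod_pos
    intro t ht
    have h1 := (Finset.mem_Ico.mp ht).2
    have : t < n := by omega
    exact Nat.mul_pos (by omega) (by omega)

open ComplexOrder in
lemma rank_conj_aux {p q : ℕ} (A : Matrix (Fin p) (Fin q) ℂ) :
    (A.conjTranspose * A).rank = A.rank :=
  Matrix.rank_conjTranspose_mul_self A

lemma hwc_rec {m n k i : ℕ} (hi : i < m - k) :
    (i + 1) * (n - i) * hwc m n k (i + 1) = (k + 1 + i) * (m - k - i) * hwc m n k i := by
  unfold hwc
  rw [Finset.prod_range_succ]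
  rw [show Finset.Ico i (m - k) = insert i (Finset.Ico (i+1) (m-k)) from
    (Finset.insert_Ico_add_one_left_eq_Ico hi).symm]
  rw [Finset.prod_insert (by simp)]
  ring

/-- For `SL₂` and `m ≤ n`, `0 ≤ k ≤ m`, the highest weight vector of the
summand `V(n-m+2k)` of `Hom(V(m), V(n)) ≅ ⊕_{k=0}^m V(n-m+2k)` (Clebsch–Gordan)
corresponds to a matrix of rank `m+1-k`; in particular its corank, as a map
`V(m) → V(n)`, is `k`.  (A matrix `A : V(m) → V(n)` is a highest weight vector of weight
`n-m+2k` for the `sl₂`-action on `Hom(V(m),V(n))` iff `e·A := E_n A - A E_m = 0` and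
`h·A := H_n A - A H_m = (n-m+2k)·A`.) -/
theorem stmt_17 (m n k : ℕ) (hmn : m ≤ n) (hk : k ≤ m) :
    ∃ A : Matrix (Fin (n + 1)) (Fin (m + 1)) ℂ, A ≠ 0 ∧
      sl2E n * A - A * sl2E m = 0 ∧
      sl2H n * A - A * sl2H m = (((n : ℂ) - (m : ℂ) + 2 * (k : ℂ))) • A ∧
      A.rank = m + 1 - k ∧ (m + 1) - A.rank = k := by
  set A : Matrix (Fin (n + 1)) (Fin (m + 1)) ℂ :=
    fun i j => if i.1 + k = j.1 then ((hwc m n k i.1 : ℕ) : ℂ) else 0 with hA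
  have hrank : A.rank = m + 1 - k := by
    have hw : A.conjTranspose * A = Matrix.diagonal
        (fun j : Fin (m+1) => if k ≤ j.1 then (((hwc m n k (j.1 - k))^2 : ℕ) : ℂ) else 0) := by
      ext j j'
      rw [Matrix.mul_apply]
      by_cases hkj : k ≤ j.1
      · have hi0 : j.1 - k < n + 1 := by omega
        rw [Fintype.sum_eq_single (⟨j.1 - k, hi0⟩ : Fin (n+1)) ?_]
        · have h1 : j.1 - k + k = j.1 := by omega
          simp only [Matrix.conjTranspose_apply, Matrix.diagonal_apply]
          simp only [hA]
          rw [if_pos h1]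
          rcases eq_or_ne j j' with hjj | hjj
          · subst hjj
            rw [if_pos h1, if_pos rfl, if_pos hkj, star_natCast]
            push_cast
            ring
          · rw [if_neg (fun h : j.1 - k + k = j'.1 => hjj (Fin.ext (by omega))),
                mul_zero, if_neg hjj]
        · intro l hl
          have hv : l.1 ≠ j.1 - k := fun hv => hl (Fin.ext hv)
          simp only [Matrix.conjTranspose_apply]
          simp only [hA]
          rw [if_neg (by omega : ¬ (l.1 + k = j.1))]
          simp
      · rw [Finset.sum_eq_zero, Matrix.diagonal_apply]
        · rw [if_neg hkj]
          split <;> rfl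
        · intro l _
          simp only [Matrix.conjTranspose_apply]
          simp only [hA]
          rw [if_neg (by omega : ¬ (l.1 + k = j.1))]
          simp
    have hr := rank_conj_aux A
    rw [hw, Matrix.rank_diagonal] at hr
    rw [← hr]
    have e : {j : Fin (m+1) //
        (if k ≤ j.1 then (((hwc m n k (j.1 - k))^2 : ℕ) : ℂ) else 0) ≠ 0} ≃ Fin (m + 1 - k) :=
      { toFun := fun j => ⟨j.1.1 - k, by
          have hne := j.2
          have hle : k ≤ j.1.1 := by
            by_contra h
            rw [if_neg h] at hne
            exact hne rfl
          have := j.1.isLt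
          omega⟩
        invFun := fun i => ⟨⟨i.1 + k, by omega⟩, by
          rw [if_pos (by omega : k ≤ i.1 + k)]
          exact Nat.cast_ne_zero.mpr (pow_ne_zero 2 (hwc_pos hk hmn (by omega)).ne')⟩
        left_inv := fun j => by
          have hne := j.2
          have hle : k ≤ j.1.1 := by
            by_contra h
            rw [if_neg h] at hne
            exact hne rfl
          ext
          simp
          omega
        right_inv := fun i => by ext; simp }
    rw [Fintype.card_congr e, Fintype.card_fin]
  refine ⟨A, ?_, ?_, ?_, hrank, by rw [hrank]; omega⟩
  · intro h0
    have h1 := congrFun (congrFun h0 ⟨0, by omega⟩) ⟨k, by omega⟩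
    simp only [hA, Matrix.zero_apply] at h1
    rw [if_pos (Nat.zero_add k)] at h1
    exact Nat.cast_ne_zero.mpr (hwc_pos hk hmn (by omega)).ne' h1
  · ext i j
    simp only [Matrix.sub_apply, Matrix.mul_apply, Matrix.zero_apply, sub_eq_zero]
    by_cases hij : i.1 + k + 1 = j.1
    · have hjlt := j.isLt
      have hi1 : i.1 + 1 < n + 1 := by omega
      have hik : i.1 + k < m + 1 := by omega
      rw [Fintype.sum_eq_single (⟨i.1 + 1, hi1⟩ : Fin (n+1)) ?_,
          Fintype.sum_eq_single (⟨i.1 + k, hik⟩ : Fin (m+1)) ?_]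
      · simp only [sl2E, hA]
        rw [if_pos trivial, if_pos trivial,
            if_pos (show i.1 + 1 + k = j.1 by omega),
            if_pos (show i.1 + k + 1 = j.1 from hij)]
        rw [← Nat.cast_mul, ← Nat.cast_mul]
        congr 1
        have e1 : n + 1 - (i.1 + 1) = n - i.1 := by omega
        have e2 : j.1 = i.1 + k + 1 := hij.symm
        have e3 : m + 1 - j.1 = m - k - i.1 := by omega
        rw [e1, e3, e2]
        calc (i.1 + 1) * (n - i.1) * hwc m n k (i.1 + 1)
            = (k + 1 + i.1) * (m - k - i.1) * hwc m n k i.1 := hwc_rec (by omega)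
          _ = hwc m n k i.1 * ((i.1 + k + 1) * (m - k - i.1)) := by ring
      · intro l hl
        have hv : l.1 ≠ i.1 + k := fun hv => hl (Fin.ext hv)
        simp only [sl2E, hA]
        rw [if_neg (by omega : ¬ (i.1 + k = l.1))]
        simp
      · intro l hl
        have hv : l.1 ≠ i.1 + 1 := fun hv => hl (Fin.ext hv)
        simp only [sl2E, hA]
        rw [if_neg (by omega : ¬ (i.1 + 1 = l.1))]
        simp
    · rw [Finset.sum_eq_zero, Finset.sum_eq_zero]
      · intro l _
        simp only [sl2E, hA]
        by_cases h1 : i.1 + k = l.1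
        · rw [if_neg (by omega : ¬ (l.1 + 1 = j.1))]
          simp
        · rw [if_neg h1]
          simp
      · intro l _
        simp only [sl2E, hA]
        by_cases h1 : i.1 + 1 = l.1
        · rw [if_neg (by omega : ¬ (l.1 + k = j.1))]
          simp
        · rw [if_neg h1]
          simp
  · ext i j
    simp only [Matrix.sub_apply, Matrix.mul_apply, Matrix.smul_apply, smul_eq_mul]
    rw [Fintype.sum_eq_single i ?_, Fintype.sum_eq_single j ?_]
    · simp only [sl2H, hA, if_pos rfl]
      by_cases hij : i.1 + k = j.1
      · rw [if_pos hij]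
        have hc : (j.1 : ℂ) = (i.1 : ℂ) + k := by exact_mod_cast congrArg (Nat.cast : ℕ → ℂ) hij.symm
        simp only [if_true]
        rw [hc]
        ring
      · rw [if_neg hij]
        simp only [if_true]
        ring
    · intro l hl
      simp only [sl2H, hA]
      rw [if_neg hl, mul_zero]
    · intro l hl
      simp only [sl2H]
      rw [if_neg (Ne.symm hl), zero_mul]
end
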